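/- For every prime p ≥ 7 and every integer k ≥ 1, there exists a finite partially ordered set P with exactly 2·p^k + p elements whose automorphism group Aut(P) is isomorphic to the cyclic group Z/p^k. -/

import Mathlib

namespace AutPosetZMod

variable (p n : ℕ)

/-- The carrier: two copies of `ZMod n` (levels A, B) and one copy of `ZMod p` (level C). -/
inductive Pt (p n : ℕ) : Type
  | A : ZMod n → Pt p n
  | B : ZMod n → Pt p n
  | C : ZMod p → Pt p n

namespace Pt

/-- Reduction map `ZMod n → ZMod p` (sensible when `p ∣ n`). -/
def prj (i : ZMod n) : ZMod p := (i.val : ZMod p)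

/-- The strict order relation: `A i < B j` iff `j ∈ {i, i+1}`, and
`A i < C m` iff `prj i ∈ {m, m+1, m+3}`. -/
def rel : Pt p n → Pt p n → Prop
  | A i, B j => j = i ∨ j = i + 1
  | A i, C m => prj p n i = m ∨ prj p n i = m + 1 ∨ prj p n i = m + 3
  | _, _ => False

@[simp] theorem rel_AB (i j : ZMod n) :
    rel p n (A i) (B j) ↔ (j = i ∨ j = i + 1) := Iff.rfl

@[simp] theorem rel_AC (i : ZMod n) (m : ZMod p) :
    rel p n (A i) (C m) ↔
      (prj p n i = m ∨ prj p n i = m + 1 ∨ prj p n i = m + 3) := Iff.rfl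

instance : PartialOrder (Pt p n) where
  le x y := x = y ∨ rel p n x y
  le_refl x := Or.inl rfl
  le_trans x y z hxy hyz := by
    rcases hxy with rfl | hxy
    · exact hyz
    · rcases hyz with rfl | hyz
      · exact Or.inr hxy
      · cases x <;> cases y <;> cases z <;>
          first
          | exact (hxy : False).elim
          | exact (hyz : False).elim
  le_antisymm x y hxy hyx := by
    rcases hxy with rfl | hxy
    · rfl
    · rcases hyx with rfl | hyx
      · rfl
      · cases x <;> cases y <;>
          first
          | exact (hxy : False).elim
          | exact (hyx : False).elim

theorem le_def {x y : Pt p n} : x ≤ y ↔ x = y ∨ rel p n x y := Iff.rfl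

theorem rel_irrefl (x : Pt p n) : ¬ rel p n x x := by
  cases x <;> exact fun h => h

theorem rel_asymm {x y : Pt p n} (h : rel p n x y) (h' : rel p n y x) : False := by
  cases x <;> cases y <;> first | exact h | exact h'

theorem lt_iff {x y : Pt p n} : x < y ↔ rel p n x y := by
  rw [lt_iff_le_not_ge, le_def, le_def]
  constructor
  · rintro ⟨rfl | h, hn⟩
    · exact absurd (Or.inl rfl) hn
    · exact h
  · intro h
    refine ⟨Or.inr h, ?_⟩
    rintro (rfl | h')
    · exact rel_irrefl p n _ h
    · exact rel_asymm p n h h'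

section Lemmas

variable [NeZero p] [NeZero n]

theorem prj_lift (hpn : p ≤ n) (u : ZMod p) :
    prj p n ((u.val : ZMod n)) = u := by
  unfold prj
  rw [ZMod.val_cast_of_lt (lt_of_lt_of_le u.val_lt hpn)]
  exact ZMod.natCast_rightInverse u

theorem prj_surj (hpn : p ≤ n) : Function.Surjective (prj p n) :=
  fun u => ⟨(u.val : ZMod n), prj_lift p n hpn u⟩

theorem cast_mod (hpn : p ∣ n) (x : ℕ) : ((x % n : ℕ) : ZMod p) = (x : ZMod p) := by
  conv_rhs => rw [← Nat.mod_add_div x n]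
  push_cast
  rw [(ZMod.natCast_eq_zero_iff n p).mpr hpn]
  ring

theorem prj_add (hpn : p ∣ n) (i j : ZMod n) :
    prj p n (i + j) = prj p n i + prj p n j := by
  unfold prj
  rw [ZMod.val_add, cast_mod p n hpn, Nat.cast_add]

theorem prj_zero : prj p n 0 = 0 := by
  unfold prj
  rw [ZMod.val_zero, Nat.cast_zero]

theorem prj_neg (hpn : p ∣ n) (i : ZMod n) : prj p n (-i) = - prj p n i := by
  have h : prj p n i + prj p n (-i) = 0 := by
    rw [← prj_add p n hpn, add_neg_cancel, prj_zero]
  linear_combination h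

theorem prj_sub (hpn : p ∣ n) (i j : ZMod n) :
    prj p n (i - j) = prj p n i - prj p n j := by
  rw [sub_eq_add_neg, prj_add p n hpn, prj_neg p n hpn, sub_eq_add_neg]

end Lemmas

/-- Rotation by `t`. -/
def shift (t : ZMod n) : Pt p n → Pt p n
  | A i => A (i + t)
  | B j => B (j + t)
  | C m => C (m + prj p n t)

variable [NeZero p] [NeZero n]

theorem shift_shift (hpn : p ∣ n) (s t : ZMod n) (x : Pt p n) :
    shift p n s (shift p n t x) = shift p n (t + s) x := by
  cases x <;> simp [shift, add_assoc, prj_add p n hpn]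

theorem shift_zero (x : Pt p n) : shift p n 0 x = x := by
  cases x <;> simp [shift, prj_zero]

theorem rel_shift (hpn : p ∣ n) (t : ZMod n) (x y : Pt p n) :
    rel p n (shift p n t x) (shift p n t y) ↔ rel p n x y := by
  cases x <;> cases y <;> try exact Iff.rfl
  case A.B i j =>
    show (j + t = i + t ∨ j + t = i + t + 1) ↔ (j = i ∨ j = i + 1)
    rw [show i + t + 1 = (i + 1) + t from by ring, add_left_inj, add_left_inj]
  case A.C i m =>
    show (prj p n (i + t) = m + prj p n t ∨
          prj p n (i + t) = m + prj p n t + 1 ∨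
          prj p n (i + t) = m + prj p n t + 3) ↔ _
    rw [prj_add p n hpn,
      show m + prj p n t + 1 = (m + 1) + prj p n t from by ring,
      show m + prj p n t + 3 = (m + 3) + prj p n t from by ring,
      show prj p n i + prj p n t = m + prj p n t ↔ prj p n i = m from add_left_inj _,
      add_left_inj, add_left_inj]
    exact Iff.rfl

theorem shift_inj (hpn : p ∣ n) (t : ZMod n) : Function.Injective (shift p n t) := by
  intro x y h
  have := congrArg (shift p n (-t)) h
  rwa [shift_shift p n hpn, shift_shift p n hpn, add_neg_cancel, shift_zero, shift_zero] at this

/-- Rotation by `t` as an order isomorphism. -/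
def rotIso (hpn : p ∣ n) (t : ZMod n) : Pt p n ≃o Pt p n where
  toEquiv := ⟨shift p n t, shift p n (-t),
    fun x => by rw [shift_shift p n hpn, add_neg_cancel, shift_zero],
    fun x => by rw [shift_shift p n hpn, neg_add_cancel, shift_zero]⟩
  map_rel_iff' := by
    intro x y
    show shift p n t x ≤ shift p n t y ↔ x ≤ y
    rw [le_def, le_def, rel_shift p n hpn]
    constructor
    · rintro (h | h)
      · exact Or.inl (shift_inj p n hpn t h)
      · exact Or.inr h
    · rintro (rfl | h)
      · exact Or.inl rfl
      · exact Or.inr h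

theorem rotIso_apply (hpn : p ∣ n) (t : ZMod n) (x : Pt p n) :
    rotIso p n hpn t x = shift p n t x := rfl

/-- Every automorphism of the poset is a rotation. -/
theorem exists_shift (hpn : p ∣ n) (hp7 : 7 ≤ p) (hn7 : 7 ≤ n)
    (f : Pt p n ≃o Pt p n) : ∃ t : ZMod n, ∀ x, f x = shift p n t x := by
  have hple : p ≤ n := Nat.le_of_dvd (Nat.pos_of_ne_zero (NeZero.ne n)) hpn
  -- nonzero constants
  have nzp : ∀ c : ℕ, 0 < c → c < p → ((c : ℕ) : ZMod p) ≠ 0 := by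
    intro c h1 h2 h
    rw [ZMod.natCast_eq_zero_iff] at h
    exact absurd (Nat.le_of_dvd h1 h) (by omega)
  have nzn : ∀ c : ℕ, 0 < c → c < n → ((c : ℕ) : ZMod n) ≠ 0 := by
    intro c h1 h2 h
    rw [ZMod.natCast_eq_zero_iff] at h
    exact absurd (Nat.le_of_dvd h1 h) (by omega)
  have h1p : (1 : ZMod p) ≠ 0 := by simpa using nzp 1 (by omega) (by omega)
  have h2p : (2 : ZMod p) ≠ 0 := by simpa using nzp 2 (by omega) (by omega)
  have h3p : (3 : ZMod p) ≠ 0 := by simpa using nzp 3 (by omega) (by omega)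
  have h4p : (4 : ZMod p) ≠ 0 := by simpa using nzp 4 (by omega) (by omega)
  have h5p : (5 : ZMod p) ≠ 0 := by simpa using nzp 5 (by omega) (by omega)
  have h1n : (1 : ZMod n) ≠ 0 := by simpa using nzn 1 (by omega) (by omega)
  have h2n : (2 : ZMod n) ≠ 0 := by simpa using nzn 2 (by omega) (by omega)
  -- basic transfers
  have lt_push : ∀ {x y : Pt p n}, x < y → f x < f y := fun h => f.lt_iff_lt.mpr h
  have lt_pull : ∀ {y x : Pt p n}, y < f x → f.symm y < x := by
    intro y x h
    have h2 := f.symm.lt_iff_lt.mpr h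
    rwa [OrderIso.symm_apply_apply] at h2
  have rel_f : ∀ x y : Pt p n, rel p n x y ↔ rel p n (f x) (f y) := by
    intro x y
    rw [← lt_iff, ← lt_iff, f.lt_iff_lt]
  have no_below_A : ∀ (y : Pt p n) (i : ZMod n), ¬ y < A i := by
    intro y i h
    rw [lt_iff] at h
    cases y <;> exact h
  have below_B : ∀ (y : Pt p n) (j : ZMod n), y < B j → y = A j ∨ y = A (j - 1) := by
    intro y j h
    rw [lt_iff] at h
    cases y with
    | A i =>
      rcases h with h | h
      · exact Or.inl (by rw [h])
      · exact Or.inr (congrArg Pt.A (by rw [h]; ring))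
    | B j' => exact (h : False).elim
    | C m => exact (h : False).elim
  have A_lt_B : ∀ j : ZMod n, A j < B j :=
    fun j => (lt_iff p n).mpr (Or.inl rfl)
  have A_lt_C : ∀ (m t : ZMod p), (t = m ∨ t = m + 1 ∨ t = m + 3) →
      A ((t.val : ZMod n)) < C m := by
    intro m t ht
    rw [lt_iff]
    show prj p n _ = m ∨ prj p n _ = m + 1 ∨ prj p n _ = m + 3
    rw [prj_lift p n hple]
    exact ht
  have lift_inj : ∀ u v : ZMod p, ((u.val : ZMod n)) = ((v.val : ZMod n)) → u = v := by
    intro u v h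
    have := congrArg (prj p n) h
    rwa [prj_lift p n hple, prj_lift p n hple] at this
  have two_below : ∀ (j : ZMod n) (x1 x2 x3 : Pt p n),
      x1 < B j → x2 < B j → x3 < B j → x1 = x2 ∨ x1 = x3 ∨ x2 = x3 := by
    intro j x1 x2 x3 h1 h2 h3
    rcases below_B _ _ h1 with e1 | e1 <;> rcases below_B _ _ h2 with e2 | e2 <;>
      rcases below_B _ _ h3 with e3 | e3 <;> simp [e1, e2, e3]
  have three_below : ∀ m : ZMod p, ∃ x1 x2 x3 : Pt p n,
      x1 < C m ∧ x2 < C m ∧ x3 < C m ∧ x1 ≠ x2 ∧ x1 ≠ x3 ∧ x2 ≠ x3 := by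
    intro m
    refine ⟨A ((m.val : ZMod n)), A (((m + 1).val : ZMod n)), A (((m + 3).val : ZMod n)),
      A_lt_C m m (Or.inl rfl), A_lt_C m (m + 1) (Or.inr (Or.inl rfl)),
      A_lt_C m (m + 3) (Or.inr (Or.inr rfl)), ?_, ?_, ?_⟩
    · intro h
      have := lift_inj _ _ (Pt.A.inj h)
      exact h1p (by linear_combination -this)
    · intro h
      have := lift_inj _ _ (Pt.A.inj h)
      exact h3p (by linear_combination -this)
    · intro h
      have := lift_inj _ _ (Pt.A.inj h)
      exact h2p (by linear_combination -this)
  -- f preserves the levels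
  have fA : ∀ i : ZMod n, ∃ i', f (A i) = A i' := by
    intro i
    rcases hx : f (A i) with i' | j' | m'
    · exact ⟨i', rfl⟩
    · exfalso
      have h1 : A j' < f (A i) := by rw [hx]; exact A_lt_B j'
      exact no_below_A _ _ (lt_pull h1)
    · exfalso
      have h1 : A ((m'.val : ZMod n)) < f (A i) := by
        rw [hx]; exact A_lt_C m' m' (Or.inl rfl)
      exact no_below_A _ _ (lt_pull h1)
  have fB : ∀ j : ZMod n, ∃ j', f (B j) = B j' := by
    intro j
    rcases hx : f (B j) with i' | j' | m'
    · exfalso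
      have h1 : f (A j) < f (B j) := lt_push (A_lt_B j)
      rw [hx] at h1
      exact no_below_A _ _ h1
    · exact ⟨j', rfl⟩
    · exfalso
      obtain ⟨x1, x2, x3, l1, l2, l3, d12, d13, d23⟩ := three_below m'
      rw [← hx] at l1 l2 l3
      rcases two_below j _ _ _ (lt_pull l1) (lt_pull l2) (lt_pull l3) with h | h | h
      · exact d12 (f.symm.injective h)
      · exact d13 (f.symm.injective h)
      · exact d23 (f.symm.injective h)
  have fC : ∀ m : ZMod p, ∃ m', f (C m) = C m' := by
    intro m
    rcases hx : f (C m) with i' | j' | m'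
    · exfalso
      obtain ⟨x1, x2, x3, l1, l2, l3, d12, d13, d23⟩ := three_below m
      have := lt_push l1
      rw [hx] at this
      exact no_below_A _ _ this
    · exfalso
      obtain ⟨x1, x2, x3, l1, l2, l3, d12, d13, d23⟩ := three_below m
      have l1' := lt_push l1; have l2' := lt_push l2; have l3' := lt_push l3
      rw [hx] at l1' l2' l3'
      rcases two_below j' _ _ _ l1' l2' l3' with h | h | h
      · exact d12 (f.injective h)
      · exact d13 (f.injective h)
      · exact d23 (f.injective h)
    · exact ⟨m', rfl⟩
  choose α hα using fA
  choose β hβ using fB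
  choose γ hγ using fC
  have αinj : Function.Injective α := by
    intro a b h
    have : f (A a) = f (A b) := by rw [hα, hα, h]
    exact Pt.A.inj (f.injective this)
  have keyB : ∀ i j : ZMod n, (j = i ∨ j = i + 1) ↔ (β j = α i ∨ β j = α i + 1) := by
    intro i j
    have h := rel_f (A i) (B j)
    rw [hα, hβ] at h
    exact h
  have keyC : ∀ (i : ZMod n) (m : ZMod p),
      (prj p n i = m ∨ prj p n i = m + 1 ∨ prj p n i = m + 3) ↔
      (prj p n (α i) = γ m ∨ prj p n (α i) = γ m + 1 ∨ prj p n (α i) = γ m + 3) := by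
    intro i m
    have h := rel_f (A i) (C m)
    rw [hα, hγ] at h
    exact h
  -- the step relation
  have hstep : ∀ j : ZMod n, α (j + 1) = α j + 1 ∨ α (j + 1) = α j - 1 := by
    intro j
    have hb1 := (keyB j (j + 1)).mp (Or.inr rfl)
    have hb2 := (keyB (j + 1) (j + 1)).mp (Or.inl rfl)
    rcases hb1 with h1 | h1 <;> rcases hb2 with h2 | h2
    · have := αinj (h2.symm.trans h1)
      exact (h1n (by linear_combination this)).elim
    · exact Or.inr (by linear_combination h1 - h2)
    · exact Or.inl (h2.symm.trans h1)
    · have h3 : α (j + 1) = α j := by linear_combination h1 - h2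
      have := αinj h3
      exact (h1n (by linear_combination this)).elim
  have all_of_zero : ∀ (P : ZMod n → Prop), P 0 → (∀ j, P j → P (j + 1)) → ∀ j, P j := by
    intro P h0 hs j
    have key : ∀ t : ℕ, P ((t : ℕ) : ZMod n) := by
      intro t
      induction t with
      | zero => simpa using h0
      | succ t ih =>
        have := hs _ ih
        rwa [← Nat.cast_one, ← Nat.cast_add] at this
    have := key j.val
    rwa [ZMod.natCast_val, ZMod.cast_id] at this
  have hstep_succ : ∀ j : ZMod n, α (j + 1) = α j + 1 → α (j + 1 + 1) = α (j + 1) + 1 := by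
    intro j h
    rcases hstep (j + 1) with h' | h'
    · exact h'
    · exfalso
      have he : α (j + 1 + 1) = α j := by rw [h', h]; ring
      have := αinj he
      exact h2n (by linear_combination this)
  have hstep_pred : ∀ j : ZMod n, α (j + 1) = α j - 1 → α (j + 1 + 1) = α (j + 1) - 1 := by
    intro j h
    rcases hstep (j + 1) with h' | h'
    · exfalso
      have he : α (j + 1 + 1) = α j := by rw [h', h]; ring
      have := αinj he
      exact h2n (by linear_combination this)
    · exact h'
  set a0 := α 0 with ha0
  set c' := prj p n a0 with hc'
  rcases hstep 0 with h0 | h0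
  · -- increasing case: α j = a0 + j
    have hplus : ∀ j : ZMod n, α (j + 1) = α j + 1 :=
      all_of_zero (fun j => α (j + 1) = α j + 1) h0 hstep_succ
    have haff : ∀ j : ZMod n, α j = a0 + j :=
      all_of_zero (fun j => α j = a0 + j) (by simp [ha0])
        (fun j hj => by
          have hj' : α j = a0 + j := hj
          show α (j + 1) = a0 + (j + 1)
          rw [hplus j, hj']; ring)
    -- determine γ
    have keyC1 : ∀ u m : ZMod p, (u = m ∨ u = m + 1 ∨ u = m + 3) ↔
        (c' + u = γ m ∨ c' + u = γ m + 1 ∨ c' + u = γ m + 3) := by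
      intro u m
      obtain ⟨i, hi⟩ := prj_surj p n hple u
      have h := keyC i m
      have h2 : prj p n (α i) = c' + u := by
        rw [haff i, prj_add p n hpn, hi, hc']
      rw [hi, h2] at h
      exact h
    have hγ1 : ∀ m : ZMod p, γ m = c' + m := by
      intro m
      have hXm := (keyC1 m m).mp (Or.inl rfl)
      have hX1 := (keyC1 (m + 1) m).mp (Or.inr (Or.inl rfl))
      rcases hXm with h | h | h
      · linear_combination -h
      · rcases hX1 with h' | h' | h'
        · exact absurd (show (2 : ZMod p) = 0 by linear_combination h' - h) h2p
        · exact absurd (show (1 : ZMod p) = 0 by linear_combination h' - h) h1p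
        · exact absurd (show (1 : ZMod p) = 0 by linear_combination h - h') h1p
      · rcases hX1 with h' | h' | h'
        · exact absurd (show (4 : ZMod p) = 0 by linear_combination h' - h) h4p
        · exact absurd (show (3 : ZMod p) = 0 by linear_combination h' - h) h3p
        · exact absurd (show (1 : ZMod p) = 0 by linear_combination h' - h) h1p
    -- determine β
    have hβval : ∀ j : ZMod n, β j = a0 + j := by
      intro j
      have b1 := (keyB j j).mp (Or.inl rfl)
      have b2 := (keyB (j - 1) j).mp (Or.inr (by ring))
      rw [haff j] at b1
      rw [haff (j - 1)] at b2
      rcases b1 with b1 | b1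
      · exact b1
      · rcases b2 with b2 | b2
        · exact absurd (show (2 : ZMod n) = 0 by linear_combination b2 - b1) h2n
        · exact absurd (show (1 : ZMod n) = 0 by linear_combination b2 - b1) h1n
    refine ⟨a0, ?_⟩
    intro x
    cases x with
    | A i =>
      rw [hα i]
      show A (α i) = A (i + a0)
      rw [haff i, add_comm]
    | B j =>
      rw [hβ j]
      show B (β j) = B (j + a0)
      rw [hβval j, add_comm]
    | C m =>
      rw [hγ m]
      show C (γ m) = C (m + prj p n a0)
      rw [hγ1 m, ← hc', add_comm]
  · -- decreasing case: impossible
    exfalso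
    have hminus : ∀ j : ZMod n, α (j + 1) = α j - 1 :=
      all_of_zero (fun j => α (j + 1) = α j - 1) h0 hstep_pred
    have haff : ∀ j : ZMod n, α j = a0 - j :=
      all_of_zero (fun j => α j = a0 - j) (by simp [ha0])
        (fun j hj => by
          have hj' : α j = a0 - j := hj
          show α (j + 1) = a0 - (j + 1)
          rw [hminus j, hj']; ring)
    have keyC1 : ∀ u m : ZMod p, (u = m ∨ u = m + 1 ∨ u = m + 3) ↔
        (c' - u = γ m ∨ c' - u = γ m + 1 ∨ c' - u = γ m + 3) := by
      intro u m
      obtain ⟨i, hi⟩ := prj_surj p n hple u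
      have h := keyC i m
      have h2 : prj p n (α i) = c' - u := by
        rw [haff i, prj_sub p n hpn, hi, hc']
      rw [hi, h2] at h
      exact h
    set Y := γ 0 with hY
    have k1 := (keyC1 (0 + 1) 0).mp (Or.inr (Or.inl rfl))
    have k3 := (keyC1 (0 + 3) 0).mp (Or.inr (Or.inr rfl))
    have kY := (keyC1 (c' - Y) 0).mpr (Or.inl (by ring))
    rcases kY with hk | hk | hk
    · -- Y = c'
      rcases k1 with h | h | h
      · exact h1p (by linear_combination hk - h)
      · exact h2p (by linear_combination hk - h)
      · exact h4p (by linear_combination hk - h)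
    · -- Y = c' - 1
      rcases k3 with h | h | h
      · exact h2p (by linear_combination hk - h)
      · exact h3p (by linear_combination hk - h)
      · exact h5p (by linear_combination hk - h)
    · -- Y = c' - 3
      rcases k1 with h | h | h
      · exact h2p (by linear_combination h - hk)
      · exact h1p (by linear_combination h - hk)
      · exact h1p (by linear_combination hk - h)

/-- Equivalence with a sum type, for counting. -/
def equivSum : Pt p n ≃ (ZMod n ⊕ ZMod n ⊕ ZMod p) where
  toFun x := match x with
    | A i => Sum.inl i
    | B j => Sum.inr (Sum.inl j)
    | C m => Sum.inr (Sum.inr m)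
  invFun x := match x with
    | Sum.inl i => A i
    | Sum.inr (Sum.inl j) => B j
    | Sum.inr (Sum.inr m) => C m
  left_inv x := by cases x <;> rfl
  right_inv x := by rcases x with i | j | m <;> rfl

instance : Fintype (Pt p n) := Fintype.ofEquiv _ (equivSum p n).symm

theorem card_pt : Fintype.card (Pt p n) = n + n + p := by
  rw [Fintype.card_congr (equivSum p n), Fintype.card_sum, Fintype.card_sum,
    ZMod.card, ZMod.card]
  omega

end Pt

end AutPosetZMod

open AutPosetZMod

/-- For every prime `p ≥ 7` and every integer `k ≥ 1`, there exists a finite poset `P`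
with exactly `2 * p ^ k + p` elements whose automorphism group is isomorphic to the
cyclic group `ℤ/p^k`. -/
theorem exists_poset_aut_iso_zmod_prime_pow_ge_seven (p k : ℕ) (hp : p.Prime)
    (hp7 : 7 ≤ p) (hk : 1 ≤ k) :
    ∃ (P : Type) (_ : PartialOrder P) (_ : Fintype P),
      Fintype.card P = 2 * p ^ k + p ∧
      Nonempty ((P ≃o P) ≃* Multiplicative (ZMod (p ^ k))) := by
  haveI : NeZero p := ⟨by omega⟩
  haveI : NeZero (p ^ k) := ⟨pow_ne_zero k (by omega)⟩
  have hpn : p ∣ p ^ k := dvd_pow_self p (by omega)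
  have hn7 : 7 ≤ p ^ k := le_trans hp7 (Nat.le_self_pow (by omega) p)
  refine ⟨Pt p (p ^ k), inferInstance, inferInstance, ?_, ?_⟩
  · rw [Pt.card_pt]
    ring
  · -- the monoid hom from rotations
    set n := p ^ k with hn
    let F : Multiplicative (ZMod n) →* (Pt p n ≃o Pt p n) :=
      { toFun := fun t => Pt.rotIso p n hpn t.toAdd
        map_one' := by
          apply RelIso.ext
          intro x
          show Pt.shift p n (Multiplicative.toAdd 1) x = x
          rw [toAdd_one, Pt.shift_zero]
        map_mul' := by
          intro s t
          apply RelIso.ext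
          intro x
          show Pt.shift p n (Multiplicative.toAdd (s * t)) x
            = Pt.shift p n s.toAdd (Pt.shift p n t.toAdd x)
          rw [Pt.shift_shift p n hpn, toAdd_mul, add_comm] }
    have hFinj : Function.Injective F := by
      intro s t h
      have h0 : F s (Pt.B 0) = F t (Pt.B 0) := by rw [h]
      have h1 : (0 : ZMod n) + s.toAdd = 0 + t.toAdd := Pt.B.inj h0
      rw [zero_add, zero_add] at h1
      exact Multiplicative.toAdd.injective h1
    have hFsurj : Function.Surjective F := by
      intro f
      obtain ⟨t, ht⟩ := Pt.exists_shift p n hpn hp7 hn7 f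
      refine ⟨Multiplicative.ofAdd t, ?_⟩
      apply RelIso.ext
      intro x
      show Pt.shift p n (Multiplicative.toAdd (Multiplicative.ofAdd t)) x = f x
      rw [toAdd_ofAdd, ht x]
    exact ⟨(MulEquiv.ofBijective F ⟨hFinj, hFsurj⟩).symm⟩
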